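/- Let b₀ = 1 and b_k = ∏_{j=1}^{k} ((j−1)(2j−3) − 3)/(3(2j−1)j). Then the function ψ₂(ζ) = ∑_{k=0}^∞ b_k ζ^{2k} ζ̄^{2k} = ∑_{k=0}^∞ b_k |ζ|^{4k}, which converges on the unit disc, satisfies ∂²ψ₂/∂ζ̄² = (6ζ²/(ζ²ζ̄² − 3)) ψ₂ on Δ. -/

import Mathlib

open Complex

/-- The Wirtinger derivative `∂f/∂ζ̄ = (1/2)(∂f/∂x + i ∂f/∂y)`. -/
noncomputable def dbar (f : ℂ → ℂ) (z : ℂ) : ℂ :=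
  (2⁻¹ : ℂ) * (fderiv ℝ f z 1 + Complex.I * fderiv ℝ f z Complex.I)

/-- The coefficient sequence `b_k = ∏_{j=1}^k ((j-1)(2j-3) - 3)/(3(2j-1)j)`, `b₀ = 1`. -/
noncomputable def bSeq (k : ℕ) : ℝ :=
  ∏ j ∈ Finset.Icc 1 k,
    (((j : ℝ) - 1) * (2 * (j : ℝ) - 3) - 3) / (3 * (2 * (j : ℝ) - 1) * (j : ℝ))

/-- The second particular solution `ψ₂(ζ) = ∑_{k=0}^∞ b_k ζ^{2k} ζ̄^{2k}`. -/
noncomputable def psiTwo (ζ : ℂ) : ℂ :=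
  ∑' k : ℕ, (bSeq k : ℂ) * ζ ^ (2 * k) * (starRingEnd ℂ ζ) ^ (2 * k)


lemma bSeq_zero : bSeq 0 = 1 := by simp [bSeq]

lemma bSeq_succ (k : ℕ) : bSeq (k + 1) =
    bSeq k * (((k : ℝ)) * (2 * k - 1) - 3) / (3 * (2 * k + 1) * (k + 1)) := by
  rw [bSeq, bSeq, Finset.prod_Icc_succ_top (Nat.le_add_left 1 k)]
  push_cast
  ring

lemma bSeq_one : bSeq 1 = -1 := by
  rw [bSeq_succ, bSeq_zero]; norm_num

lemma bSeq_abs_le (k : ℕ) : |bSeq k| ≤ 3 * (1/3 : ℝ) ^ k := by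
  have key : ∀ m : ℕ, |bSeq (m + 1)| ≤ (1/3 : ℝ) ^ m := by
    intro m
    induction m with
    | zero => rw [bSeq_one]; norm_num
    | succ n ih =>
      rw [bSeq_succ, mul_div_assoc, abs_mul]
      have h1 : |(((n + 1 : ℕ) : ℝ) * (2 * (n + 1 : ℕ) - 1) - 3) /
          (3 * (2 * (n + 1 : ℕ) + 1) * ((n + 1 : ℕ) + 1))| ≤ 1 / 3 := by
        have hden : (0:ℝ) < 3 * (2 * (n + 1 : ℕ) + 1) * ((n + 1 : ℕ) + 1) := by positivity
        rw [abs_div, abs_of_pos hden, div_le_iff₀ hden]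
        rw [abs_le]
        push_cast
        constructor <;> nlinarith [sq_nonneg ((n : ℝ))]
      calc |bSeq (n + 1)| * _ ≤ (1/3 : ℝ) ^ n * (1/3) :=
            mul_le_mul ih h1 (abs_nonneg _) (by positivity)
        _ = (1/3 : ℝ) ^ (n + 1) := by ring
  cases k with
  | zero => rw [bSeq_zero]; norm_num
  | succ m =>
    calc |bSeq (m + 1)| ≤ (1/3 : ℝ) ^ m := key m
      _ = 3 * (1/3 : ℝ) ^ (m + 1) := by ring

/-- The key coefficient recurrence. -/
lemma bSeq_rec (k : ℕ) :
    bSeq k * (2 * k : ℕ) * ((2 * k - 1 : ℕ) : ℝ) -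
      3 * bSeq (k + 1) * ((2 * k + 2 : ℕ) : ℝ) * ((2 * k + 1 : ℕ) : ℝ) = 6 * bSeq k := by
  cases k with
  | zero => rw [bSeq_zero, bSeq_one]; norm_num
  | succ m =>
    rw [bSeq_succ (m + 1)]
    have h1 : (0:ℝ) < 2 * ((m:ℝ) + 1) + 1 := by positivity
    have h2 : (0:ℝ) < (m:ℝ) + 1 + 1 := by positivity
    have e1 : ((2 * (m + 1) - 1 : ℕ) : ℝ) = 2 * (m:ℝ) + 1 := by push_cast [Nat.mul_succ]; ring
    rw [e1]
    push_cast
    field_simp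
    ring

noncomputable def uu (k : ℕ) : ℝ := 48 * ((k : ℝ) + 1) ^ 2 * (1/3 : ℝ) ^ k

lemma uu_summable : Summable uu := by
  have h2 : Summable (fun k : ℕ => ((k : ℝ)) ^ 2 * (1/3 : ℝ) ^ k) :=
    summable_pow_mul_geometric_of_norm_lt_one 2 (by norm_num)
  have h1 : Summable (fun k : ℕ => ((k : ℝ)) ^ 1 * (1/3 : ℝ) ^ k) :=
    summable_pow_mul_geometric_of_norm_lt_one 1 (by norm_num)
  have h0 : Summable (fun k : ℕ => (1/3 : ℝ) ^ k) := summable_geometric_of_lt_one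
    (by norm_num) (by norm_num)
  have := (((h2.add (h1.mul_left 2)).add h0).mul_left 48)
  apply this.congr
  intro k
  simp only [uu, pow_one]
  ring

lemma norm_aux {b : ℝ} {c w : ℂ} {k n : ℕ} (hb : |b| ≤ 3 * (1/3 : ℝ) ^ k)
    (hc : ‖c‖ ≤ (2 * (k : ℝ) + 2) ^ 2) (hw : ‖w‖ ≤ 1) :
    ‖(b : ℂ) * c * w ^ n‖ ≤ uu k := by
  rw [norm_mul, norm_mul, norm_real, norm_pow, Real.norm_eq_abs]
  have hwn : ‖w‖ ^ n ≤ 1 := pow_le_one₀ (norm_nonneg w) hw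
  have h3 : (0:ℝ) ≤ (1/3:ℝ)^k := by positivity
  calc |b| * ‖c‖ * ‖w‖ ^ n ≤ (3 * (1/3:ℝ)^k) * ((2 * (k : ℝ) + 2) ^ 2) * 1 := by
        apply mul_le_mul (mul_le_mul hb hc (norm_nonneg c) (by positivity)) hwn
          (by positivity) (by positivity)
    _ ≤ uu k := by
        rw [uu, mul_one]
        nlinarith [Nat.cast_nonneg (α := ℝ) k]

noncomputable def Fser (w : ℂ) : ℂ := ∑' k : ℕ, (bSeq k : ℂ) * w ^ (2 * k)
noncomputable def Fser1 (w : ℂ) : ℂ :=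
  ∑' k : ℕ, (bSeq k : ℂ) * ((2 * k : ℕ) : ℂ) * w ^ (2 * k - 1)
noncomputable def Fser2 (w : ℂ) : ℂ :=
  ∑' k : ℕ, (bSeq k : ℂ) * ((2 * k : ℕ) : ℂ) * ((2 * k - 1 : ℕ) : ℂ) * w ^ (2 * k - 2)

lemma norm_term0 {w : ℂ} (hw : ‖w‖ ≤ 1) (k : ℕ) :
    ‖(bSeq k : ℂ) * w ^ (2 * k)‖ ≤ uu k := by
  have := norm_aux (c := 1) (n := 2 * k) (bSeq_abs_le k)
    (by rw [norm_one]; nlinarith [Nat.cast_nonneg (α := ℝ) k]) hw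
  simpa using this

lemma norm_term1 {w : ℂ} (hw : ‖w‖ ≤ 1) (k : ℕ) :
    ‖(bSeq k : ℂ) * ((2 * k : ℕ) : ℂ) * w ^ (2 * k - 1)‖ ≤ uu k := by
  apply norm_aux (bSeq_abs_le k) _ hw
  rw [Complex.norm_natCast]
  push_cast
  nlinarith [Nat.cast_nonneg (α := ℝ) k]

lemma norm_term2 {w : ℂ} (hw : ‖w‖ ≤ 1) (k : ℕ) :
    ‖(bSeq k : ℂ) * ((2 * k : ℕ) : ℂ) * ((2 * k - 1 : ℕ) : ℂ) * w ^ (2 * k - 2)‖ ≤ uu k := by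
  rw [mul_assoc (bSeq k : ℂ)]
  apply norm_aux (bSeq_abs_le k) _ hw
  rw [norm_mul, Complex.norm_natCast, Complex.norm_natCast]
  have h1 : ((2 * k - 1 : ℕ) : ℝ) ≤ 2 * (k:ℝ) + 2 := by
    have := Nat.sub_le (2 * k) 1
    calc ((2 * k - 1 : ℕ) : ℝ) ≤ ((2 * k : ℕ) : ℝ) := by exact_mod_cast this
      _ ≤ 2 * (k:ℝ) + 2 := by push_cast; linarith
  have h2 : ((2 * k : ℕ) : ℝ) ≤ 2 * (k:ℝ) + 2 := by push_cast; linarith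
  calc ((2 * k : ℕ) : ℝ) * ((2 * k - 1 : ℕ) : ℝ) ≤ (2 * (k:ℝ) + 2) * (2 * (k:ℝ) + 2) :=
        mul_le_mul h2 h1 (by positivity) (by positivity)
    _ = (2 * (k:ℝ) + 2) ^ 2 := by ring

lemma summable_term0 {w : ℂ} (hw : ‖w‖ ≤ 1) :
    Summable fun k : ℕ => (bSeq k : ℂ) * w ^ (2 * k) :=
  Summable.of_norm_bounded uu_summable (norm_term0 hw)

lemma summable_term1 {w : ℂ} (hw : ‖w‖ ≤ 1) :
    Summable fun k : ℕ => (bSeq k : ℂ) * ((2 * k : ℕ) : ℂ) * w ^ (2 * k - 1) :=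
  Summable.of_norm_bounded uu_summable (norm_term1 hw)

lemma summable_term2 {w : ℂ} (hw : ‖w‖ ≤ 1) :
    Summable fun k : ℕ => (bSeq k : ℂ) * ((2 * k : ℕ) : ℂ) * ((2 * k - 1 : ℕ) : ℂ) * w ^ (2 * k - 2) :=
  Summable.of_norm_bounded uu_summable (norm_term2 hw)

lemma hasDerivAt_tsum_ball {f f' : ℕ → ℂ → ℂ} {u : ℕ → ℝ} (hu : Summable u)
    (hd : ∀ (k : ℕ), ∀ x ∈ Metric.ball (0:ℂ) 1, HasDerivAt (f k) (f' k x) x)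
    (hb : ∀ (k : ℕ), ∀ x ∈ Metric.ball (0:ℂ) 1, ‖f k x‖ ≤ u k)
    (hb' : ∀ (k : ℕ), ∀ x ∈ Metric.ball (0:ℂ) 1, ‖f' k x‖ ≤ u k)
    {x : ℂ} (hx : x ∈ Metric.ball (0:ℂ) 1) :
    HasDerivAt (fun y => ∑' k, f k y) (∑' k, f' k x) x := by
  apply hasDerivAt_of_tendstoUniformlyOn Metric.isOpen_ball
    (tendstoUniformlyOn_tsum_nat hu (fun k y hy => hb' k y hy))
    (Filter.Eventually.of_forall fun N y hy => HasDerivAt.sum fun k _ => hd k y hy)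
    _ hx
  intro y hy
  simp only [Finset.sum_apply]
  exact (Summable.of_norm_bounded hu fun k => hb k y hy).hasSum.tendsto_sum_nat

lemma mem_ball_norm_lt {w : ℂ} (h : w ∈ Metric.ball (0:ℂ) 1) : ‖w‖ < 1 := by
  simpa [Metric.mem_ball, Complex.dist_eq] using h

lemma hasDerivAt_Fser {w : ℂ} (hw : w ∈ Metric.ball (0:ℂ) 1) :
    HasDerivAt Fser (Fser1 w) w := by
  apply hasDerivAt_tsum_ball uu_summable _
    (fun k x hx => norm_term0 (mem_ball_norm_lt hx).le k)
    (fun k x hx => norm_term1 (mem_ball_norm_lt hx).le k) hw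
  intro k x hx
  have := (hasDerivAt_pow (2 * k) x).const_mul (bSeq k : ℂ)
  refine this.congr_deriv ?_
  ring

lemma hasDerivAt_Fser1 {w : ℂ} (hw : w ∈ Metric.ball (0:ℂ) 1) :
    HasDerivAt Fser1 (Fser2 w) w := by
  apply hasDerivAt_tsum_ball uu_summable _
    (fun k x hx => norm_term1 (mem_ball_norm_lt hx).le k)
    (fun k x hx => norm_term2 (mem_ball_norm_lt hx).le k) hw
  intro k x hx
  have := (hasDerivAt_pow (2 * k - 1) x).const_mul ((bSeq k : ℂ) * ((2 * k : ℕ) : ℂ))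
  refine this.congr_deriv ?_
  have : 2 * k - 1 - 1 = 2 * k - 2 := by omega
  rw [this]
  ring

lemma key_ode {s : ℂ} (hs : ‖s‖ ≤ 1) : (s ^ 2 - 3) * Fser2 s = 6 * Fser s := by
  set g : ℕ → ℂ := fun k => (bSeq k : ℂ) * ((2 * k : ℕ) : ℂ) * ((2 * k - 1 : ℕ) : ℂ) * s ^ (2 * k)
    with hg
  set h : ℕ → ℂ := fun k =>
      ((3 * bSeq (k+1) : ℝ) : ℂ) * (((2 * k + 2 : ℕ) : ℂ) * ((2 * k + 1 : ℕ) : ℂ)) * s ^ (2 * k)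
    with hh
  have hgsum : Summable g := by
    apply Summable.of_norm_bounded uu_summable
    intro k
    rw [hg]
    simp only []
    rw [mul_assoc (bSeq k : ℂ)]
    apply norm_aux (bSeq_abs_le k) _ hs
    rw [norm_mul, Complex.norm_natCast, Complex.norm_natCast]
    have h1 : ((2 * k - 1 : ℕ) : ℝ) ≤ 2 * (k:ℝ) + 2 := by
      have := Nat.sub_le (2 * k) 1
      calc ((2 * k - 1 : ℕ) : ℝ) ≤ ((2 * k : ℕ) : ℝ) := by exact_mod_cast this
        _ ≤ 2 * (k:ℝ) + 2 := by push_cast; linarith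
    have h2 : ((2 * k : ℕ) : ℝ) ≤ 2 * (k:ℝ) + 2 := by push_cast; linarith
    calc ((2 * k : ℕ) : ℝ) * ((2 * k - 1 : ℕ) : ℝ) ≤ (2 * (k:ℝ) + 2) * (2 * (k:ℝ) + 2) :=
          mul_le_mul h2 h1 (by positivity) (by positivity)
      _ = (2 * (k:ℝ) + 2) ^ 2 := by ring
  have hhsum : Summable h := by
    apply Summable.of_norm_bounded uu_summable
    intro k
    apply norm_aux _ _ hs
    · have habs : |3 * bSeq (k+1)| = 3 * |bSeq (k+1)| := by
        rw [abs_mul]; norm_num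
      rw [habs]
      calc 3 * |bSeq (k+1)| ≤ 3 * (3 * (1/3:ℝ) ^ (k+1)) := by
            have := bSeq_abs_le (k+1); linarith [abs_nonneg (bSeq (k+1))]
        _ = 3 * (1/3:ℝ) ^ k := by ring
    · rw [norm_mul, Complex.norm_natCast, Complex.norm_natCast]
      push_cast
      nlinarith [Nat.cast_nonneg (α := ℝ) k]
  have e1 : s ^ 2 * Fser2 s = ∑' k, g k := by
    rw [Fser2, ← tsum_mul_left]
    apply tsum_congr
    intro k
    cases k with
    | zero => simp [hg]
    | succ m =>
      have h2 : s ^ (2 * (m+1)) = s ^ (2 * (m+1) - 2) * s ^ 2 := by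
        rw [← pow_add]
        congr 1
      simp only [hg]
      rw [h2]
      ring
  have e2 : (3 : ℂ) * Fser2 s = ∑' k, h k := by
    rw [Fser2, ← tsum_mul_left]
    have hsum3 : Summable fun k : ℕ =>
        (3:ℂ) * ((bSeq k : ℂ) * ((2 * k : ℕ) : ℂ) * ((2 * k - 1 : ℕ) : ℂ) * s ^ (2 * k - 2)) :=
      (summable_term2 hs).mul_left 3
    rw [Summable.tsum_eq_zero_add hsum3]
    have h0 : (3:ℂ) * ((bSeq 0 : ℂ) * ((2 * 0 : ℕ) : ℂ) * ((2 * 0 - 1 : ℕ) : ℂ) * s ^ (2 * 0 - 2)) = 0 := by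
      simp
    rw [h0, zero_add]
    apply tsum_congr
    intro k
    simp only [hh]
    rw [show 2 * (k + 1) - 1 = 2 * k + 1 from by omega,
      show 2 * (k + 1) - 2 = 2 * k from by omega,
      show 2 * (k + 1) = 2 * k + 2 from by omega]
    push_cast
    ring
  have e3 : (s ^ 2 - 3) * Fser2 s = ∑' k, (g k - h k) := by
    rw [Summable.tsum_sub hgsum hhsum, ← e1, ← e2]
    ring
  rw [e3]
  have e4 : ∀ k, g k - h k = 6 * (bSeq k : ℂ) * s ^ (2 * k) := by
    intro k
    have hr := bSeq_rec k
    have hrc : ((bSeq k * (2 * k : ℕ) * ((2 * k - 1 : ℕ) : ℝ) -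
        3 * bSeq (k + 1) * ((2 * k + 2 : ℕ) : ℝ) * ((2 * k + 1 : ℕ) : ℝ) : ℝ) : ℂ) =
        ((6 * bSeq k : ℝ) : ℂ) := by exact_mod_cast congrArg Complex.ofReal hr
    push_cast at hrc
    simp only [hg, hh]
    push_cast
    linear_combination s ^ (2 * k) * hrc
  calc ∑' k, (g k - h k) = ∑' k, 6 * (bSeq k : ℂ) * s ^ (2 * k) := tsum_congr e4
    _ = 6 * Fser s := by
        rw [Fser, ← tsum_mul_left]
        apply tsum_congr
        intro k
        ring

noncomputable def Nmap (z : ℂ) : ℂ := z * (starRingEnd ℂ) z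

lemma Nmap_mem_ball {ζ : ℂ} (hζ : ζ ∈ Metric.ball (0:ℂ) 1) :
    Nmap ζ ∈ Metric.ball (0:ℂ) 1 := by
  have h := mem_ball_norm_lt hζ
  simp only [Metric.mem_ball, Complex.dist_eq, sub_zero]
  calc ‖Nmap ζ‖ = ‖ζ‖ * ‖ζ‖ := by rw [Nmap, norm_mul, RCLike.norm_conj]
    _ < 1 := by nlinarith [norm_nonneg ζ, sq_nonneg (‖ζ‖ + 1), sq_nonneg (‖ζ‖ - 1)]

noncomputable def NmapD (ζ : ℂ) : ℂ →L[ℝ] ℂ :=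
  ζ • (Complex.conjCLE : ℂ →L[ℝ] ℂ) + (starRingEnd ℂ ζ) • (ContinuousLinearMap.id ℝ ℂ)

lemma hasFDerivAt_Nmap (ζ : ℂ) : HasFDerivAt Nmap (NmapD ζ) ζ := by
  have h1 : HasFDerivAt (fun z : ℂ => z) (ContinuousLinearMap.id ℝ ℂ) ζ := hasFDerivAt_id ζ
  have h2 : HasFDerivAt (fun z : ℂ => (starRingEnd ℂ) z)
      ((Complex.conjCLE : ℂ ≃L[ℝ] ℂ) : ℂ →L[ℝ] ℂ) ζ := Complex.conjCLE.hasFDerivAt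
  exact h1.mul h2

lemma psiTwo_eq_comp : psiTwo = fun z => Fser (Nmap z) := by
  funext z
  rw [psiTwo, Fser]
  apply tsum_congr
  intro k
  rw [Nmap, mul_pow, mul_assoc]

lemma NmapD_one (ζ : ℂ) : NmapD ζ 1 = ζ + starRingEnd ℂ ζ := by
  simp only [NmapD, ContinuousLinearMap.add_apply, ContinuousLinearMap.smul_apply,
    ContinuousLinearMap.id_apply, ContinuousLinearEquiv.coe_coe, Complex.conjCLE_apply,
    smul_eq_mul, map_one, mul_one]

lemma NmapD_I (ζ : ℂ) : NmapD ζ Complex.I = -ζ * Complex.I + starRingEnd ℂ ζ * Complex.I := by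
  simp only [NmapD, ContinuousLinearMap.add_apply, ContinuousLinearMap.smul_apply,
    ContinuousLinearMap.id_apply, ContinuousLinearEquiv.coe_coe, Complex.conjCLE_apply,
    Complex.conj_I, smul_eq_mul]
  ring

lemma hasFDerivAt_psiTwo {ζ : ℂ} (hζ : ζ ∈ Metric.ball (0:ℂ) 1) :
    HasFDerivAt psiTwo (Fser1 (Nmap ζ) • NmapD ζ) ζ := by
  rw [psiTwo_eq_comp]
  exact (hasDerivAt_Fser (Nmap_mem_ball hζ)).comp_hasFDerivAt ζ (hasFDerivAt_Nmap ζ)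

lemma dbar_psiTwo {ζ : ℂ} (hζ : ζ ∈ Metric.ball (0:ℂ) 1) :
    dbar psiTwo ζ = ζ * Fser1 (Nmap ζ) := by
  rw [dbar, (hasFDerivAt_psiTwo hζ).fderiv]
  simp only [ContinuousLinearMap.smul_apply, NmapD_one, NmapD_I, smul_eq_mul]
  rw [show (Complex.I : ℂ) * (Fser1 (Nmap ζ) * (-ζ * Complex.I + starRingEnd ℂ ζ * Complex.I)) =
    Complex.I ^ 2 * (Fser1 (Nmap ζ) * (-ζ + starRingEnd ℂ ζ)) from by ring, Complex.I_sq]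
  ring

lemma hasFDerivAt_G {ζ : ℂ} (hζ : ζ ∈ Metric.ball (0:ℂ) 1) :
    HasFDerivAt (fun z => z * Fser1 (Nmap z))
      (ζ • (Fser2 (Nmap ζ) • NmapD ζ) + (Fser1 (Nmap ζ)) • (ContinuousLinearMap.id ℝ ℂ)) ζ := by
  have h1 : HasFDerivAt (fun z : ℂ => z) (ContinuousLinearMap.id ℝ ℂ) ζ := hasFDerivAt_id ζ
  have h2 : HasFDerivAt (fun z => Fser1 (Nmap z)) (Fser2 (Nmap ζ) • NmapD ζ) ζ :=
    (hasDerivAt_Fser1 (Nmap_mem_ball hζ)).comp_hasFDerivAt ζ (hasFDerivAt_Nmap ζ)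
  exact h1.mul h2

lemma dbar_dbar_psiTwo {ζ : ℂ} (hζ : ζ ∈ Metric.ball (0:ℂ) 1) :
    dbar (dbar psiTwo) ζ = ζ ^ 2 * Fser2 (Nmap ζ) := by
  have hev : dbar psiTwo =ᶠ[nhds ζ] (fun z => z * Fser1 (Nmap z)) := by
    filter_upwards [Metric.isOpen_ball.mem_nhds hζ] with z hz using dbar_psiTwo hz
  rw [dbar, hev.fderiv_eq, (hasFDerivAt_G hζ).fderiv]
  simp only [ContinuousLinearMap.add_apply, ContinuousLinearMap.smul_apply,
    ContinuousLinearMap.id_apply, NmapD_one, NmapD_I, smul_eq_mul]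
  ring_nf
  rw [Complex.I_sq]
  ring


/-- **The second particular solution.**  The series defining
`ψ₂(ζ) = ∑ b_k ζ^{2k} ζ̄^{2k}` converges on the unit disc and `ψ₂` satisfies
`∂²ψ₂/∂ζ̄² = (6ζ²/(ζ²ζ̄² - 3)) ψ₂` there. -/
theorem psi_two_solves :
    ∀ ζ ∈ Metric.ball (0 : ℂ) 1,
      (Summable fun k : ℕ => (bSeq k : ℂ) * ζ ^ (2 * k) * (starRingEnd ℂ ζ) ^ (2 * k)) ∧
      dbar (dbar psiTwo) ζ =
        (6 * ζ ^ 2 / (ζ ^ 2 * (starRingEnd ℂ ζ) ^ 2 - 3)) * psiTwo ζ := by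
  intro ζ hζ
  have hN : Nmap ζ ∈ Metric.ball (0:ℂ) 1 := Nmap_mem_ball hζ
  have hN1 : ‖Nmap ζ‖ ≤ 1 := (mem_ball_norm_lt hN).le
  constructor
  · apply (summable_term0 hN1).congr
    intro k
    rw [Nmap, mul_pow, mul_assoc]
  · rw [dbar_dbar_psiTwo hζ]
    have hFs : psiTwo ζ = Fser (Nmap ζ) := by rw [psiTwo_eq_comp]
    have hkey := key_ode hN1
    have hD : (Nmap ζ) ^ 2 = ζ ^ 2 * (starRingEnd ℂ ζ) ^ 2 := by rw [Nmap]; ring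
    rw [hD] at hkey
    have hne : ζ ^ 2 * (starRingEnd ℂ ζ) ^ 2 - 3 ≠ 0 := by
      intro h
      have h3 : ζ ^ 2 * (starRingEnd ℂ ζ) ^ 2 = 3 := by
        rw [sub_eq_zero] at h; exact h
      have hnorm : ‖ζ ^ 2 * (starRingEnd ℂ ζ) ^ 2‖ < 1 := by
        rw [norm_mul, norm_pow, norm_pow, RCLike.norm_conj]
        have h1 := mem_ball_norm_lt hζ
        have h2 : ‖ζ‖ ^ 2 < 1 := by nlinarith [norm_nonneg ζ]
        nlinarith [sq_nonneg ‖ζ‖]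
      rw [h3] at hnorm
      norm_num at hnorm
    rw [hFs, div_mul_eq_mul_div, eq_div_iff hne]
    linear_combination ζ ^ 2 * hkey
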